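/- Let A ∈ ℝ^{m×n} have rank n with QR factorization A = QR and let ΔA ∈ ℝ^{m×n}. If ‖H_R‖₂ (‖G_R‖₂‖ΔA‖_F + ‖H_R‖₂‖ΔA‖_F²) < 1/4, then A + ΔA has a unique QR factorization A + ΔA = (Q + ΔQ)(R + ΔR) with (Q + ΔQ)^T(Q + ΔQ) = I_n and R + ΔR upper triangular with positive diagonal entries, and moreover ‖ΔR‖_F ≤ 2(‖G_R‖₂‖Q^T(ΔA)‖_F + ‖H_R‖₂‖ΔA‖_F²) / (1 + √(1 − 4‖H_R‖₂(‖G_R‖₂‖Q^T(ΔA)‖_F + ‖H_R‖₂‖ΔA‖_F²))) ≤ 2(‖G_R‖₂‖Q^T(ΔA)‖_F + ‖H_R‖₂‖ΔA‖_F²). -/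

import Mathlib

open Matrix Kronecker

noncomputable section

/-- Frobenius norm of a real matrix. -/
noncomputable def frob {m k : Type*} [Fintype m] [Fintype k] (A : Matrix m k ℝ) : ℝ :=
  Real.sqrt (∑ i, ∑ j, (A i j) ^ 2)

/-- Euclidean norm of a vector. -/
noncomputable def vnorm {m : Type*} [Fintype m] (v : m → ℝ) : ℝ :=
  Real.sqrt (∑ i, (v i) ^ 2)

/-- Spectral norm (ℓ²-operator norm) of a real matrix. -/
noncomputable def spec {m k : Type*} [Fintype m] [Fintype k] [DecidableEq k]
    (A : Matrix m k ℝ) : ℝ :=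
  ‖LinearMap.toContinuousLinearMap (Matrix.toEuclideanLin A)‖

/-- Entrywise absolute value of a matrix. -/
def eabs {m k : Type*} (A : Matrix m k ℝ) : Matrix m k ℝ :=
  Matrix.of fun i j => |A i j|

/-- Column-stacking operator: `vec X` indexed by (column, row). -/
def vec {n : ℕ} (X : Matrix (Fin n) (Fin n) ℝ) : Fin n × Fin n → ℝ :=
  fun p => X p.2 p.1

/-- Upper triangular part of a matrix. -/
def ut {n : ℕ} (X : Matrix (Fin n) (Fin n) ℝ) : Matrix (Fin n) (Fin n) ℝ :=
  Matrix.of fun i j => if i ≤ j then X i j else 0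

/-- Strictly lower triangular part of a matrix. -/
def slt {n : ℕ} (X : Matrix (Fin n) (Fin n) ℝ) : Matrix (Fin n) (Fin n) ℝ :=
  Matrix.of fun i j => if j < i then X i j else 0

/-- Upper triangular part with diagonal halved. -/
def up {n : ℕ} (X : Matrix (Fin n) (Fin n) ℝ) : Matrix (Fin n) (Fin n) ℝ :=
  Matrix.of fun i j => if i = j then X i j / 2 else if i ≤ j then X i j else 0

/-- `M_ut`: diagonal matrix with `vec (ut X) = (Mut n).mulVec (vec X)`. -/
def Mut (n : ℕ) : Matrix (Fin n × Fin n) (Fin n × Fin n) ℝ :=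
  Matrix.diagonal fun p => if p.2 ≤ p.1 then 1 else 0

/-- `M_slt`: diagonal matrix with `vec (slt X) = (Mslt n).mulVec (vec X)`. -/
def Mslt (n : ℕ) : Matrix (Fin n × Fin n) (Fin n × Fin n) ℝ :=
  Matrix.diagonal fun p => if p.1 < p.2 then 1 else 0

/-- `M_up`: diagonal matrix with `vec (up X) = (Mup n).mulVec (vec X)`. -/
def Mup (n : ℕ) : Matrix (Fin n × Fin n) (Fin n × Fin n) ℝ :=
  Matrix.diagonal fun p => if p.2 = p.1 then (1 : ℝ) / 2 else if p.2 < p.1 then 1 else 0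

/-- `M_uvec`: 0–1 row-selection matrix extracting entries on or above the diagonal. -/
def Muvec (n : ℕ) : Matrix {p : Fin n × Fin n // p.2 ≤ p.1} (Fin n × Fin n) ℝ :=
  Matrix.of fun q p => if (q : Fin n × Fin n) = p then 1 else 0

/-- `M_slvec`: 0–1 row-selection matrix extracting entries strictly below the diagonal. -/
def Mslvec (n : ℕ) : Matrix {p : Fin n × Fin n // p.1 < p.2} (Fin n × Fin n) ℝ :=
  Matrix.of fun q p => if (q : Fin n × Fin n) = p then 1 else 0

/-- The vec-permutation matrix `Π_{nn}` with `(vecPerm n).mulVec (vec X) = vec Xᵀ`. -/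
def vecPerm (n : ℕ) : Matrix (Fin n × Fin n) (Fin n × Fin n) ℝ :=
  Matrix.of fun p q => if p.1 = q.2 ∧ p.2 = q.1 then 1 else 0

def IsUnitLowerTri {n : ℕ} (L : Matrix (Fin n) (Fin n) ℝ) : Prop :=
  (∀ i, L i i = 1) ∧ ∀ i j : Fin n, i < j → L i j = 0

def IsLowerTri {n : ℕ} (L : Matrix (Fin n) (Fin n) ℝ) : Prop :=
  ∀ i j : Fin n, i < j → L i j = 0

def IsUpperTri {n : ℕ} (U : Matrix (Fin n) (Fin n) ℝ) : Prop :=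
  ∀ i j : Fin n, j < i → U i j = 0

def IsStrictLowerTri {n : ℕ} (X : Matrix (Fin n) (Fin n) ℝ) : Prop :=
  ∀ i j : Fin n, i ≤ j → X i j = 0

/-- Leading (n−1)×(n−1) principal submatrix. -/
def lead {n : ℕ} (U : Matrix (Fin n) (Fin n) ℝ) : Matrix (Fin (n - 1)) (Fin (n - 1)) ℝ :=
  Matrix.of fun i j => U (Fin.castLE (Nat.sub_le n 1) i) (Fin.castLE (Nat.sub_le n 1) j)

/-- `pad B` is the n×n matrix with B as leading (n−1)×(n−1) block and zeros elsewhere. -/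
def pad {n : ℕ} (B : Matrix (Fin (n - 1)) (Fin (n - 1)) ℝ) : Matrix (Fin n) (Fin n) ℝ :=
  Matrix.of fun i j =>
    if h1 : (i : ℕ) < n - 1 then
      if h2 : (j : ℕ) < n - 1 then B ⟨i, h1⟩ ⟨j, h2⟩ else 0
    else 0

/-- `Y_L = M_slvec (I_n ⊗ L) M_slt (diag(U_{n−1}^{−T}, 0) ⊗ L^{−1})`. -/
noncomputable def YL {n : ℕ} (L U : Matrix (Fin n) (Fin n) ℝ) :
    Matrix {p : Fin n × Fin n // p.1 < p.2} (Fin n × Fin n) ℝ :=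
  Mslvec n * ((1 : Matrix (Fin n) (Fin n) ℝ) ⊗ₖ L) * Mslt n *
    (pad (((lead U)⁻¹)ᵀ) ⊗ₖ L⁻¹)

/-- `Y_U = M_uvec (Uᵀ ⊗ I_n) M_ut (U^{−T} ⊗ L^{−1})`. -/
noncomputable def YU {n : ℕ} (L U : Matrix (Fin n) (Fin n) ℝ) :
    Matrix {p : Fin n × Fin n // p.2 ≤ p.1} (Fin n × Fin n) ℝ :=
  Muvec n * (Uᵀ ⊗ₖ (1 : Matrix (Fin n) (Fin n) ℝ)) * Mut n * ((U⁻¹)ᵀ ⊗ₖ L⁻¹)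

/-- `G_R = M_uvec (Rᵀ ⊗ I_n) M_up [R^{−T} ⊗ I_n + (I_n ⊗ R^{−T}) Π_{nn}]`. -/
noncomputable def GR {n : ℕ} (R : Matrix (Fin n) (Fin n) ℝ) :
    Matrix {p : Fin n × Fin n // p.2 ≤ p.1} (Fin n × Fin n) ℝ :=
  Muvec n * (Rᵀ ⊗ₖ (1 : Matrix (Fin n) (Fin n) ℝ)) * Mup n *
    ((R⁻¹)ᵀ ⊗ₖ (1 : Matrix (Fin n) (Fin n) ℝ) +
      ((1 : Matrix (Fin n) (Fin n) ℝ) ⊗ₖ (R⁻¹)ᵀ) * vecPerm n)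

/-- `H_R = M_uvec (Rᵀ ⊗ I_n) M_up (R^{−T} ⊗ R^{−T})`. -/
noncomputable def HR {n : ℕ} (R : Matrix (Fin n) (Fin n) ℝ) :
    Matrix {p : Fin n × Fin n // p.2 ≤ p.1} (Fin n × Fin n) ℝ :=
  Muvec n * (Rᵀ ⊗ₖ (1 : Matrix (Fin n) (Fin n) ℝ)) * Mup n * ((R⁻¹)ᵀ ⊗ₖ (R⁻¹)ᵀ)

namespace QR

variable {n : ℕ}

abbrev UIdx (n : ℕ) := {p : Fin n × Fin n // p.2 ≤ p.1}

def uvec (X : Matrix (Fin n) (Fin n) ℝ) : UIdx n → ℝ := fun q => X q.1.2 q.1.1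

def fromUvec (w : UIdx n → ℝ) : Matrix (Fin n) (Fin n) ℝ :=
  Matrix.of fun i j => if h : i ≤ j then w ⟨(j, i), h⟩ else 0

lemma isUpperTri_fromUvec (w : UIdx n → ℝ) : IsUpperTri (fromUvec w) := by
  intro i j hji
  simp [fromUvec, Matrix.of_apply, not_le.mpr hji]

lemma uvec_fromUvec (w : UIdx n → ℝ) : uvec (fromUvec w) = w := by
  funext q
  simp [uvec, fromUvec, q.2]

lemma fromUvec_uvec {X : Matrix (Fin n) (Fin n) ℝ} (hX : IsUpperTri X) :
    fromUvec (uvec X) = X := by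
  ext i j
  by_cases h : i ≤ j
  · simp [fromUvec, uvec, h]
  · simp [fromUvec, h, (hX i j (not_le.mp h)).symm]

lemma vec_add (X Y : Matrix (Fin n) (Fin n) ℝ) : _root_.vec (X + Y) = _root_.vec X + _root_.vec Y := rfl

lemma vec_sub (X Y : Matrix (Fin n) (Fin n) ℝ) : _root_.vec (X - Y) = _root_.vec X - _root_.vec Y := rfl

/-- Kronecker action on _root_.vec. -/
lemma kron_mulVec (A B X : Matrix (Fin n) (Fin n) ℝ) :
    (A ⊗ₖ B).mulVec (_root_.vec X) = _root_.vec (B * X * Aᵀ) := by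
  funext p
  simp only [Matrix.mulVec, dotProduct, _root_.vec, Matrix.mul_apply,
    Matrix.kroneckerMap_apply, Matrix.transpose_apply, Finset.sum_mul]
  rw [Fintype.sum_prod_type]
  exact Finset.sum_congr rfl fun k _ => Finset.sum_congr rfl fun l _ => by ring

lemma Mup_mulVec (X : Matrix (Fin n) (Fin n) ℝ) :
    (Mup n).mulVec (_root_.vec X) = _root_.vec (up X) := by
  funext p
  simp only [Mup, Matrix.mulVec_diagonal, _root_.vec, up, Matrix.of_apply]
  rcases eq_or_ne p.2 p.1 with h | h
  · simp [h]; ring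
  · rw [if_neg h, if_neg h]
    rcases lt_or_ge p.2 p.1 with h2 | h2
    · rw [if_pos h2, if_pos (le_of_lt h2), one_mul]
    · rw [if_neg (not_lt.mpr h2), if_neg (not_le.mpr (lt_of_le_of_ne h2 (Ne.symm h))), zero_mul]

lemma Muvec_mulVec (w : Fin n × Fin n → ℝ) :
    (Muvec n).mulVec w = fun q : UIdx n => w q.1 := by
  funext q
  simp only [Muvec, Matrix.mulVec, dotProduct, Matrix.of_apply]
  simp [Finset.sum_ite_eq]

lemma vecPerm_mulVec (X : Matrix (Fin n) (Fin n) ℝ) :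
    (vecPerm n).mulVec (_root_.vec X) = _root_.vec Xᵀ := by
  funext p
  simp only [vecPerm, Matrix.mulVec, dotProduct, Matrix.of_apply, _root_.vec,
    Matrix.transpose_apply]
  have : ∀ q : Fin n × Fin n,
      (if p.1 = q.2 ∧ p.2 = q.1 then (1:ℝ) else 0) * X q.2 q.1
        = if q = (p.2, p.1) then X p.1 p.2 else 0 := by
    intro q
    by_cases h : q = (p.2, p.1)
    · subst h; simp
    · rw [if_neg h, if_neg, zero_mul]
      rintro ⟨h1, h2⟩
      exact h (Prod.ext h2.symm h1.symm)
  rw [Finset.sum_congr rfl fun q _ => this q]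
  simp

end QR
namespace QR

variable {n : ℕ}

/-- interpret a function as a point of Euclidean space -/
def toE {α : Type*} [Fintype α] (f : α → ℝ) : EuclideanSpace ℝ α := (WithLp.equiv 2 _).symm f

lemma vnorm_eq_norm {α : Type*} [Fintype α] (f : α → ℝ) : vnorm f = ‖toE f‖ := by
  rw [EuclideanSpace.norm_eq, vnorm]
  congr 1
  refine Finset.sum_congr rfl fun i _ => ?_
  rw [Real.norm_eq_abs, sq_abs]
  rfl

lemma toE_apply {α : Type*} [Fintype α] (f : α → ℝ) (i : α) : toE f i = f i := rfl

lemma toE_sub {α : Type*} [Fintype α] (f g : α → ℝ) : toE (f - g) = toE f - toE g := rfl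

lemma vnorm_nonneg {α : Type*} [Fintype α] (f : α → ℝ) : 0 ≤ vnorm f := Real.sqrt_nonneg _

lemma spec_nonneg {α β : Type*} [Fintype α] [Fintype β] [DecidableEq β]
    (M : Matrix α β ℝ) : 0 ≤ spec M := norm_nonneg _

lemma mulVec_le_spec {α β : Type*} [Fintype α] [Fintype β] [DecidableEq β]
    (M : Matrix α β ℝ) (v : β → ℝ) : vnorm (M.mulVec v) ≤ spec M * vnorm v := by
  have h := (LinearMap.toContinuousLinearMap (Matrix.toEuclideanLin M)).le_opNorm (toE v)
  have he : (LinearMap.toContinuousLinearMap (Matrix.toEuclideanLin M)) (toE v)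
      = toE (M.mulVec v) := by
    rfl
  rw [he] at h
  rw [vnorm_eq_norm, vnorm_eq_norm]
  exact h

/-- Frobenius norm as a Euclidean vector norm. -/
lemma frob_eq_vnorm {k l : Type*} [Fintype k] [Fintype l] (X : Matrix k l ℝ) :
    frob X = vnorm (fun p : k × l => X p.1 p.2) := by
  rw [frob, vnorm, Fintype.sum_prod_type]

lemma frob_nonneg {k l : Type*} [Fintype k] [Fintype l] (X : Matrix k l ℝ) : 0 ≤ frob X :=
  Real.sqrt_nonneg _

lemma frob_vec (X : Matrix (Fin n) (Fin n) ℝ) : vnorm (_root_.vec X) = frob X := by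
  rw [frob, vnorm, Fintype.sum_prod_type, Finset.sum_comm]
  rfl

lemma abs_le_vnorm {α : Type*} [Fintype α] (f : α → ℝ) (i : α) : |f i| ≤ vnorm f := by
  rw [vnorm, ← Real.sqrt_sq_eq_abs]
  apply Real.sqrt_le_sqrt
  exact Finset.single_le_sum (f := fun j => f j ^ 2) (fun j _ => sq_nonneg _) (Finset.mem_univ i)

lemma abs_le_frob {k l : Type*} [Fintype k] [Fintype l] (X : Matrix k l ℝ) (i : k) (j : l) :
    |X i j| ≤ frob X := by
  rw [frob_eq_vnorm]
  simpa using abs_le_vnorm (fun p : k × l => X p.1 p.2) (i, j)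

/-- uvec norm equals frob for upper triangular matrices. -/
lemma vnorm_uvec {X : Matrix (Fin n) (Fin n) ℝ} (hX : IsUpperTri X) :
    vnorm (uvec X) = frob X := by
  rw [vnorm, frob]
  congr 1
  have h1 : ∑ q : UIdx n, uvec X q ^ 2
      = ∑ p ∈ Finset.univ.filter (fun p : Fin n × Fin n => p.2 ≤ p.1), X p.2 p.1 ^ 2 :=
    (Finset.sum_subtype (p := fun p : Fin n × Fin n => p.2 ≤ p.1)
      (Finset.univ.filter _) (fun x => by simp) (fun p => X p.2 p.1 ^ 2)).symm
  rw [h1, Finset.sum_filter, Fintype.sum_prod_type, Finset.sum_comm]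
  refine Finset.sum_congr rfl fun i _ => Finset.sum_congr rfl fun j _ => ?_
  by_cases h : i ≤ j
  · rw [if_pos h]
  · rw [if_neg h, hX i j (not_le.mp h)]
    ring

lemma frob_sq_eq_trace {k l : Type*} [Fintype k] [Fintype l] [DecidableEq l]
    (X : Matrix k l ℝ) : frob X ^ 2 = (Xᵀ * X).trace := by
  rw [frob, Real.sq_sqrt (by positivity)]
  rw [Matrix.trace]
  simp only [Matrix.diag_apply, Matrix.mul_apply, Matrix.transpose_apply]
  rw [Finset.sum_comm]
  exact Finset.sum_congr rfl fun i _ => Finset.sum_congr rfl fun j _ => by ring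

lemma frob_mul_le {k l r : Type*} [Fintype k] [Fintype l] [Fintype r]
    (X : Matrix k l ℝ) (Y : Matrix l r ℝ) : frob (X * Y) ≤ frob X * frob Y := by
  rw [frob, frob, frob, ← Real.sqrt_mul (by positivity)]
  apply Real.sqrt_le_sqrt
  calc ∑ i, ∑ j, (X * Y) i j ^ 2
      ≤ ∑ i, ∑ j, (∑ t, X i t ^ 2) * (∑ t, Y t j ^ 2) := by
        refine Finset.sum_le_sum fun i _ => Finset.sum_le_sum fun j _ => ?_
        rw [Matrix.mul_apply]
        exact Finset.sum_mul_sq_le_sq_mul_sq Finset.univ _ _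
    _ = (∑ i, ∑ t, X i t ^ 2) * (∑ j, ∑ t, Y t j ^ 2) :=
        (Finset.sum_mul_sum Finset.univ Finset.univ
          (fun i => ∑ t, X i t ^ 2) (fun j => ∑ t, Y t j ^ 2)).symm
    _ = (∑ i, ∑ t, X i t ^ 2) * (∑ t, ∑ j, Y t j ^ 2) := by congr 1; exact Finset.sum_comm

end QR
namespace QR

variable {n : ℕ}

lemma mul_upperTri {X Y : Matrix (Fin n) (Fin n) ℝ}
    (hX : IsUpperTri X) (hY : IsUpperTri Y) : IsUpperTri (X * Y) := by
  intro i j hji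
  rw [Matrix.mul_apply]
  apply Finset.sum_eq_zero
  intro k _
  rcases lt_or_ge k i with hk | hk
  · rw [hX i k hk, zero_mul]
  · rw [hY k j (lt_of_lt_of_le hji hk), mul_zero]

lemma isUpperTri_up (X : Matrix (Fin n) (Fin n) ℝ) : IsUpperTri (up X) := by
  intro i j hji
  simp only [up, Matrix.of_apply]
  rw [if_neg (ne_of_gt hji), if_neg (not_le.mpr hji)]

lemma up_add_up_transpose {S : Matrix (Fin n) (Fin n) ℝ} (hS : Sᵀ = S) :
    up S + (up S)ᵀ = S := by
  ext i j
  have hsym : S j i = S i j := congrFun (congrFun hS i) j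
  simp only [Matrix.add_apply, Matrix.transpose_apply, up, Matrix.of_apply]
  rcases lt_trichotomy i j with h | h | h
  · rw [if_neg (ne_of_lt h), if_pos (le_of_lt h), if_neg (ne_of_gt h),
      if_neg (not_le.mpr h), add_zero]
  · subst h
    simp only [eq_self_iff_true, if_true]
    ring
  · rw [if_neg (ne_of_gt h), if_neg (not_le.mpr h), if_neg (ne_of_lt h),
      if_pos (le_of_lt h), zero_add, hsym]

lemma upperTri_blockTriangular {U : Matrix (Fin n) (Fin n) ℝ} (hU : IsUpperTri U) :
    U.BlockTriangular id := fun i j h => hU i j h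

lemma det_pos_of_upperTri {R : Matrix (Fin n) (Fin n) ℝ} (hR : IsUpperTri R)
    (hpos : ∀ i, 0 < R i i) : 0 < R.det := by
  rw [Matrix.det_of_upperTriangular (upperTri_blockTriangular hR)]
  exact Finset.prod_pos fun i _ => hpos i

lemma isUnit_det_of_upperTri {R : Matrix (Fin n) (Fin n) ℝ} (hR : IsUpperTri R)
    (hpos : ∀ i, 0 < R i i) : IsUnit R.det :=
  isUnit_iff_ne_zero.mpr (ne_of_gt (det_pos_of_upperTri hR hpos))

lemma inv_isUpperTri {R : Matrix (Fin n) (Fin n) ℝ} (hR : IsUpperTri R)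
    (hpos : ∀ i, 0 < R i i) : IsUpperTri R⁻¹ := by
  have : Invertible R := R.invertibleOfIsUnitDet (isUnit_det_of_upperTri hR hpos)
  intro i j hji
  exact Matrix.blockTriangular_inv_of_blockTriangular (upperTri_blockTriangular hR) hji

lemma inv_diag {R : Matrix (Fin n) (Fin n) ℝ} (hR : IsUpperTri R)
    (hpos : ∀ i, 0 < R i i) (i : Fin n) : R⁻¹ i i = (R i i)⁻¹ := by
  have h1 : (R * R⁻¹) i i = 1 := by
    rw [Matrix.mul_nonsing_inv R (isUnit_det_of_upperTri hR hpos)]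
    simp
  rw [Matrix.mul_apply] at h1
  have h2 : ∑ k, R i k * R⁻¹ k i = R i i * R⁻¹ i i := by
    apply Finset.sum_eq_single
    · intro k _ hk
      rcases lt_or_ge k i with hki | hki
      · rw [hR i k hki, zero_mul]
      · rw [inv_isUpperTri hR hpos k i (lt_of_le_of_ne hki (Ne.symm hk)), mul_zero]
    · intro h; exact absurd (Finset.mem_univ i) h
  rw [h2] at h1
  exact eq_inv_of_mul_eq_one_right h1

lemma HR_mulVec (R S : Matrix (Fin n) (Fin n) ℝ) :
    (HR R).mulVec (_root_.vec S) = uvec (up ((R⁻¹)ᵀ * S * R⁻¹) * R) := by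
  rw [HR, ← Matrix.mulVec_mulVec, ← Matrix.mulVec_mulVec, ← Matrix.mulVec_mulVec]
  rw [kron_mulVec, Matrix.transpose_transpose, Mup_mulVec, kron_mulVec,
    Matrix.transpose_transpose, Matrix.one_mul, Muvec_mulVec]
  rfl

lemma GR_mulVec {R : Matrix (Fin n) (Fin n) ℝ} (hR : IsUpperTri R)
    (hpos : ∀ i, 0 < R i i) (E : Matrix (Fin n) (Fin n) ℝ) :
    (GR R).mulVec (_root_.vec E) = (HR R).mulVec (_root_.vec (Rᵀ * E + Eᵀ * R)) := by
  have hinv : R⁻¹ * R = 1 := Matrix.nonsing_inv_mul R (isUnit_det_of_upperTri hR hpos)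
  have hinv' : R * R⁻¹ = 1 := Matrix.mul_nonsing_inv R (isUnit_det_of_upperTri hR hpos)
  rw [GR, HR]
  rw [← Matrix.mulVec_mulVec (M := Muvec n * (Rᵀ ⊗ₖ (1 : Matrix (Fin n) (Fin n) ℝ)) * Mup n),
    ← Matrix.mulVec_mulVec (M := Muvec n * (Rᵀ ⊗ₖ (1 : Matrix (Fin n) (Fin n) ℝ)) * Mup n)]
  congr 1
  rw [Matrix.add_mulVec, ← Matrix.mulVec_mulVec (M := (1 : Matrix (Fin n) (Fin n) ℝ) ⊗ₖ (R⁻¹)ᵀ)]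
  rw [vecPerm_mulVec, kron_mulVec, kron_mulVec, kron_mulVec]
  rw [← vec_add]
  congr 1
  have hT : (R⁻¹)ᵀ * Rᵀ = 1 := by
    rw [← Matrix.transpose_mul, hinv', Matrix.transpose_one]
  have e1 : (R⁻¹)ᵀ * (Rᵀ * E + Eᵀ * R) * R⁻¹
      = E * R⁻¹ + (R⁻¹)ᵀ * Eᵀ := by
    simp only [Matrix.mul_add, Matrix.add_mul, Matrix.mul_assoc]
    rw [hinv', Matrix.mul_one, ← Matrix.mul_assoc, ← Matrix.mul_assoc, hT, Matrix.one_mul]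
  simp only [Matrix.transpose_transpose, Matrix.transpose_one, Matrix.one_mul, Matrix.mul_one]
  rw [e1]

end QR
namespace QR

variable {n : ℕ}

lemma frob_proj_le {m : ℕ} {Q : Matrix (Fin m) (Fin n) ℝ} (hQ : Qᵀ * Q = 1)
    (ΔA : Matrix (Fin m) (Fin n) ℝ) : frob (Qᵀ * ΔA) ≤ frob ΔA := by
  set B := Qᵀ * ΔA with hB
  set C := ΔA - Q * B with hC
  have hCC : Cᵀ * C = ΔAᵀ * ΔA - Bᵀ * B := by
    rw [hC, Matrix.transpose_sub, Matrix.sub_mul, Matrix.mul_sub, Matrix.mul_sub]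
    rw [Matrix.transpose_mul]
    have e1 : ΔAᵀ * (Q * B) = Bᵀ * B := by
      rw [← Matrix.mul_assoc, hB, Matrix.transpose_mul, Matrix.transpose_transpose]
    have e2 : Bᵀ * Qᵀ * ΔA = Bᵀ * B := by
      rw [Matrix.mul_assoc, hB]
    have e3 : Bᵀ * Qᵀ * (Q * B) = Bᵀ * B := by
      rw [Matrix.mul_assoc, ← Matrix.mul_assoc Qᵀ, hQ, Matrix.one_mul]
    rw [e1, e2, e3]
    abel
  have key : frob B ^ 2 + frob C ^ 2 = frob ΔA ^ 2 := by
    rw [frob_sq_eq_trace, frob_sq_eq_trace, frob_sq_eq_trace, hCC, Matrix.trace_sub]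
    ring
  nlinarith [frob_nonneg B, frob_nonneg C, frob_nonneg ΔA, sq_nonneg (frob C)]

lemma diag_mul_upper {X Y : Matrix (Fin n) (Fin n) ℝ} (hX : IsUpperTri X)
    (hY : IsUpperTri Y) (i : Fin n) : (X * Y) i i = X i i * Y i i := by
  rw [Matrix.mul_apply]
  apply Finset.sum_eq_single
  · intro k _ hk
    rcases lt_or_gt_of_ne hk with hlt | hgt
    · rw [hX i k hlt, zero_mul]
    · rw [hY k i hgt, mul_zero]
  · intro h; exact absurd (Finset.mem_univ i) h

lemma upper_orth_eq_one {T : Matrix (Fin n) (Fin n) ℝ} (hT : IsUpperTri T)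
    (hpos : ∀ i, 0 < T i i) (horth : Tᵀ * T = 1) : T = 1 := by
  have hinv : T⁻¹ = Tᵀ := Matrix.inv_eq_left_inv horth
  have hoff : ∀ i j : Fin n, i < j → T i j = 0 := by
    intro i j hij
    have h0 : T⁻¹ j i = 0 := inv_isUpperTri hT hpos j i hij
    rw [hinv] at h0
    exact h0
  ext i j
  rcases lt_trichotomy i j with h | h | h
  · rw [hoff i j h, Matrix.one_apply_ne (ne_of_lt h)]
  · subst h
    have h1 : (Tᵀ * T) i i = 1 := by rw [horth]; simp
    rw [Matrix.mul_apply] at h1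
    have h2 : ∑ k, Tᵀ i k * T k i = T i i * T i i := by
      apply Finset.sum_eq_single
      · intro k _ hk
        rcases lt_or_gt_of_ne hk with hlt | hgt
        · rw [hoff k i hlt, mul_zero]
        · rw [hT k i hgt, mul_zero]
      · intro h; exact absurd (Finset.mem_univ i) h
    rw [h2] at h1
    rw [Matrix.one_apply_eq]
    nlinarith [hpos i]
  · rw [hT i j h, Matrix.one_apply_ne (ne_of_gt h)]

lemma chol_unique {R1 R2 : Matrix (Fin n) (Fin n) ℝ} (h1 : IsUpperTri R1)
    (p1 : ∀ i, 0 < R1 i i) (h2 : IsUpperTri R2) (p2 : ∀ i, 0 < R2 i i)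
    (heq : R1ᵀ * R1 = R2ᵀ * R2) : R1 = R2 := by
  have hd2 : IsUnit R2.det := isUnit_det_of_upperTri h2 p2
  have hinv2 : R2 * R2⁻¹ = 1 := Matrix.mul_nonsing_inv R2 hd2
  have hinv2' : R2⁻¹ * R2 = 1 := Matrix.nonsing_inv_mul R2 hd2
  set T := R1 * R2⁻¹ with hTdef
  have hTu : IsUpperTri T := mul_upperTri h1 (inv_isUpperTri h2 p2)
  have hTpos : ∀ i, 0 < T i i := by
    intro i
    rw [hTdef, diag_mul_upper h1 (inv_isUpperTri h2 p2), inv_diag h2 p2]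
    exact mul_pos (p1 i) (inv_pos.mpr (p2 i))
  have horth : Tᵀ * T = 1 := by
    rw [hTdef, Matrix.transpose_mul]
    calc (R2⁻¹)ᵀ * R1ᵀ * (R1 * R2⁻¹) = (R2⁻¹)ᵀ * (R1ᵀ * R1) * R2⁻¹ := by
          rw [Matrix.mul_assoc, Matrix.mul_assoc, Matrix.mul_assoc]
      _ = (R2⁻¹)ᵀ * (R2ᵀ * R2) * R2⁻¹ := by rw [heq]
      _ = ((R2⁻¹)ᵀ * R2ᵀ) * (R2 * R2⁻¹) := by
          rw [Matrix.mul_assoc, Matrix.mul_assoc, Matrix.mul_assoc]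
      _ = 1 := by
          rw [← Matrix.transpose_mul, hinv2, Matrix.transpose_one, Matrix.one_mul]
  have hT1 : T = 1 := upper_orth_eq_one hTu hTpos horth
  calc R1 = R1 * (R2⁻¹ * R2) := by rw [hinv2', Matrix.mul_one]
    _ = T * R2 := by rw [hTdef, Matrix.mul_assoc]
    _ = R2 := by rw [hT1, Matrix.one_mul]

end QR
namespace QR

variable {n : ℕ}

lemma spec_HR_ge {R : Matrix (Fin n) (Fin n) ℝ} (hR : IsUpperTri R)
    (hpos : ∀ i, 0 < R i i) (i : Fin n) : 1 / (2 * R i i) ≤ spec (HR R) := by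
  set S : Matrix (Fin n) (Fin n) ℝ := Matrix.of fun a b => if a = i ∧ b = i then 1 else 0
    with hS
  have hSentry : ∀ a b, S a b = if a = i ∧ b = i then 1 else 0 := fun a b => rfl
  have hcol : ∀ l, ((R⁻¹)ᵀ * S) i l = if l = i then R⁻¹ i i else 0 := by
    intro l
    rw [Matrix.mul_apply, Finset.sum_eq_single i]
    · rw [Matrix.transpose_apply, hSentry]
      rcases eq_or_ne l i with h | h
      · rw [if_pos ⟨rfl, h⟩, if_pos h, mul_one]
      · rw [if_neg (by tauto), if_neg h, mul_zero]
    · intro k _ hk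
      rw [hSentry, if_neg (by tauto), mul_zero]
    · intro h; exact absurd (Finset.mem_univ i) h
  have hM : ((R⁻¹)ᵀ * S * R⁻¹) i i = R⁻¹ i i * R⁻¹ i i := by
    rw [Matrix.mul_apply, Finset.sum_eq_single i]
    · rw [hcol, if_pos rfl]
    · intro k _ hk
      rw [hcol, if_neg hk, zero_mul]
    · intro h; exact absurd (Finset.mem_univ i) h
  have hent : (up ((R⁻¹)ᵀ * S * R⁻¹) * R) i i = 1 / (2 * R i i) := by
    rw [Matrix.mul_apply, Finset.sum_eq_single i]
    · have hupii : up ((R⁻¹)ᵀ * S * R⁻¹) i i = (R⁻¹ i i * R⁻¹ i i) / 2 := by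
        simp [up, hM]
      rw [hupii, inv_diag hR hpos]
      have := (hpos i).ne'
      field_simp
    · intro k _ hk
      rcases lt_or_gt_of_ne hk with hlt | hgt
      · have : up ((R⁻¹)ᵀ * S * R⁻¹) i k = 0 := by
          simp only [up, Matrix.of_apply]
          rw [if_neg (show ¬ i = k from fun h => lt_irrefl k (h ▸ hlt)),
            if_neg (not_le.mpr hlt)]
        rw [this, zero_mul]
      · rw [hR k i hgt, mul_zero]
    · intro h; exact absurd (Finset.mem_univ i) h
  have hfrobS : frob S = 1 := by
    rw [frob]
    have : ∀ a : Fin n, ∑ b, S a b ^ 2 = if a = i then 1 else 0 := by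
      intro a
      rcases eq_or_ne a i with h | h
      · rw [if_pos h, Finset.sum_eq_single i]
        · rw [hSentry, if_pos ⟨h, rfl⟩]; norm_num
        · intro b _ hb; rw [hSentry, if_neg (by tauto)]; norm_num
        · intro hh; exact absurd (Finset.mem_univ i) hh
      · rw [if_neg h]
        apply Finset.sum_eq_zero
        intro b _
        rw [hSentry, if_neg (by tauto)]
        norm_num
    rw [Finset.sum_congr rfl fun a _ => this a]
    simp
  have hchain : 1 / (2 * R i i) ≤ vnorm ((HR R).mulVec (_root_.vec S)) := by
    rw [HR_mulVec]
    have h1 : |uvec (up ((R⁻¹)ᵀ * S * R⁻¹) * R) ⟨(i, i), le_refl i⟩|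
        ≤ vnorm (uvec (up ((R⁻¹)ᵀ * S * R⁻¹) * R)) := abs_le_vnorm _ _
    have h2 : uvec (up ((R⁻¹)ᵀ * S * R⁻¹) * R) ⟨(i, i), le_refl i⟩ = 1 / (2 * R i i) :=
      hent
    rw [h2] at h1
    refine le_trans ?_ h1
    exact le_abs_self _
  have := mulVec_le_spec (HR R) (_root_.vec S)
  rw [frob_vec, hfrobS, mul_one] at this
  linarith

end QR
namespace QR

variable {n : ℕ}

lemma frob_transpose {k l : Type*} [Fintype k] [Fintype l] (X : Matrix k l ℝ) :
    frob Xᵀ = frob X := by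
  rw [frob, frob, Finset.sum_comm]
  rfl

lemma frob_neg {k l : Type*} [Fintype k] [Fintype l] (Y : Matrix k l ℝ) :
    frob (-Y) = frob Y := by
  rw [frob, frob]
  congr 1
  refine Finset.sum_congr rfl fun i _ => Finset.sum_congr rfl fun j _ => ?_
  simp [Matrix.neg_apply]

lemma frob_add_le {k l : Type*} [Fintype k] [Fintype l] (X Y : Matrix k l ℝ) :
    frob (X + Y) ≤ frob X + frob Y := by
  rw [frob_eq_vnorm, frob_eq_vnorm, frob_eq_vnorm, vnorm_eq_norm, vnorm_eq_norm, vnorm_eq_norm]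
  have : toE (fun p : k × l => (X + Y) p.1 p.2)
      = toE (fun p : k × l => X p.1 p.2) + toE (fun p : k × l => Y p.1 p.2) := rfl
  rw [this]
  exact norm_add_le _ _

lemma frob_sub_le {k l : Type*} [Fintype k] [Fintype l] (X Y : Matrix k l ℝ) :
    frob (X - Y) ≤ frob X + frob Y := by
  rw [sub_eq_add_neg]
  refine le_trans (frob_add_le X (-Y)) ?_
  rw [frob_neg]

lemma vnorm_add_le {α : Type*} [Fintype α] (f g : α → ℝ) :
    vnorm (f + g) ≤ vnorm f + vnorm g := by
  rw [vnorm_eq_norm, vnorm_eq_norm, vnorm_eq_norm]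
  exact norm_add_le (toE f) (toE g)

lemma fromUvec_sub (w w' : UIdx n → ℝ) :
    fromUvec (w - w') = fromUvec w - fromUvec w' := by
  ext i j
  by_cases h : i ≤ j
  · simp [fromUvec, h]
  · simp [fromUvec, h]

lemma frob_fromUvec (w : UIdx n → ℝ) : frob (fromUvec w) = vnorm w := by
  rw [← vnorm_uvec (isUpperTri_fromUvec w), uvec_fromUvec]

/-- norm bound for the iteration map -/
lemma step_norm_bound {m : ℕ} (Q ΔA : Matrix (Fin m) (Fin n) ℝ)
    (R X : Matrix (Fin n) (Fin n) ℝ) :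
    vnorm ((GR R).mulVec (_root_.vec (Qᵀ * ΔA)) + (HR R).mulVec (_root_.vec (ΔAᵀ * ΔA - Xᵀ * X)))
      ≤ spec (GR R) * frob (Qᵀ * ΔA) + spec (HR R) * (frob ΔA ^ 2 + frob X ^ 2) := by
  refine le_trans (vnorm_add_le _ _) ?_
  have h1 : vnorm ((GR R).mulVec (_root_.vec (Qᵀ * ΔA))) ≤ spec (GR R) * frob (Qᵀ * ΔA) := by
    have := mulVec_le_spec (GR R) (_root_.vec (Qᵀ * ΔA))
    rwa [frob_vec] at this
  have h2 : vnorm ((HR R).mulVec (_root_.vec (ΔAᵀ * ΔA - Xᵀ * X)))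
      ≤ spec (HR R) * (frob ΔA ^ 2 + frob X ^ 2) := by
    have hb := mulVec_le_spec (HR R) (_root_.vec (ΔAᵀ * ΔA - Xᵀ * X))
    rw [frob_vec] at hb
    refine le_trans hb ?_
    have hfr : frob (ΔAᵀ * ΔA - Xᵀ * X) ≤ frob ΔA ^ 2 + frob X ^ 2 := by
      refine le_trans (frob_sub_le _ _) ?_
      have e1 : frob (ΔAᵀ * ΔA) ≤ frob ΔA ^ 2 := by
        refine le_trans (frob_mul_le _ _) ?_
        rw [frob_transpose, sq]
      have e2 : frob (Xᵀ * X) ≤ frob X ^ 2 := by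
        refine le_trans (frob_mul_le _ _) ?_
        rw [frob_transpose, sq]
      linarith
    exact mul_le_mul_of_nonneg_left hfr (spec_nonneg _)
  linarith

/-- difference bound for the iteration map -/
lemma step_diff_bound {m : ℕ} (ΔA : Matrix (Fin m) (Fin n) ℝ)
    (R X X' : Matrix (Fin n) (Fin n) ℝ) :
    vnorm ((HR R).mulVec (_root_.vec (ΔAᵀ * ΔA - Xᵀ * X))
        - (HR R).mulVec (_root_.vec (ΔAᵀ * ΔA - X'ᵀ * X')))
      ≤ spec (HR R) * ((frob X + frob X') * frob (X' - X)) := by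
  have harg : (ΔAᵀ * ΔA - Xᵀ * X) - (ΔAᵀ * ΔA - X'ᵀ * X') = X'ᵀ * X' - Xᵀ * X := by abel
  rw [← Matrix.mulVec_sub, ← vec_sub, harg]
  have hb := mulVec_le_spec (HR R) (_root_.vec (X'ᵀ * X' - Xᵀ * X))
  rw [frob_vec] at hb
  refine le_trans hb ?_
  refine mul_le_mul_of_nonneg_left ?_ (spec_nonneg _)
  have hsplit : X'ᵀ * X' - Xᵀ * X = X'ᵀ * (X' - X) + (X' - X)ᵀ * X := by
    rw [Matrix.mul_sub, Matrix.transpose_sub, Matrix.sub_mul]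
    abel
  rw [hsplit]
  refine le_trans (frob_add_le _ _) ?_
  have e1 : frob (X'ᵀ * (X' - X)) ≤ frob X' * frob (X' - X) := by
    refine le_trans (frob_mul_le _ _) ?_
    rw [frob_transpose]
  have e2 : frob ((X' - X)ᵀ * X) ≤ frob (X' - X) * frob X := by
    refine le_trans (frob_mul_le _ _) ?_
    rw [frob_transpose]
  nlinarith [frob_nonneg (X' - X), frob_nonneg X, frob_nonneg X']

end QR
namespace QR

variable {n : ℕ}

def unE {β : Type*} [Fintype β] (x : EuclideanSpace ℝ β) : β → ℝ := fun i => x i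

lemma unE_toE {β : Type*} [Fintype β] (f : β → ℝ) : unE (toE f) = f := rfl

lemma norm_unE {β : Type*} [Fintype β] (x : EuclideanSpace ℝ β) : ‖x‖ = vnorm (unE x) :=
  (vnorm_eq_norm (unE x)).symm

lemma vnorm_sub_comm {β : Type*} [Fintype β] (f g : β → ℝ) :
    vnorm (f - g) = vnorm (g - f) := by
  rw [vnorm, vnorm]
  congr 1
  refine Finset.sum_congr rfl fun i _ => ?_
  simp only [Pi.sub_apply]
  ring

lemma exists_fixed {m : ℕ} (Q ΔA : Matrix (Fin m) (Fin n) ℝ) (R : Matrix (Fin n) (Fin n) ℝ)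
    (h4 : 4 * spec (HR R) * (spec (GR R) * frob (Qᵀ * ΔA) + spec (HR R) * frob ΔA ^ 2) < 1) :
    ∃ ΔR : Matrix (Fin n) (Fin n) ℝ, IsUpperTri ΔR ∧
      frob ΔR ≤ 2 * (spec (GR R) * frob (Qᵀ * ΔA) + spec (HR R) * frob ΔA ^ 2) /
        (1 + Real.sqrt (1 - 4 * spec (HR R) *
          (spec (GR R) * frob (Qᵀ * ΔA) + spec (HR R) * frob ΔA ^ 2))) ∧
      uvec ΔR = (GR R).mulVec (_root_.vec (Qᵀ * ΔA))
        + (HR R).mulVec (_root_.vec (ΔAᵀ * ΔA - ΔRᵀ * ΔR)) := by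
  classical
  set g := spec (GR R) with hg
  set h := spec (HR R) with hh
  set c := g * frob (Qᵀ * ΔA) + h * frob ΔA ^ 2 with hc
  set s := Real.sqrt (1 - 4 * h * c) with hs
  set ρ := 2 * c / (1 + s) with hρ
  have hg0 : 0 ≤ g := spec_nonneg _
  have hh0 : 0 ≤ h := spec_nonneg _
  have hc0 : 0 ≤ c := add_nonneg (mul_nonneg hg0 (frob_nonneg _)) (mul_nonneg hh0 (sq_nonneg _))
  have hrad : 0 < 1 - 4 * h * c := by linarith [h4]
  have hs0 : 0 < s := Real.sqrt_pos.mpr hrad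
  have hs2 : s ^ 2 = 1 - 4 * h * c := Real.sq_sqrt (le_of_lt hrad)
  have hd : (0:ℝ) < 1 + s := by linarith
  have hρ0 : 0 ≤ ρ := div_nonneg (by linarith) (le_of_lt hd)
  have hrd : ρ * (1 + s) = 2 * c := div_mul_cancel₀ _ hd.ne'
  have h2h : 2 * h * ρ = 1 - s := by
    have e : (2 * h * ρ) * (1 + s) = (1 - s) * (1 + s) := by nlinarith [hrd, hs2]
    exact mul_right_cancel₀ hd.ne' e
  have hρeq : c + h * ρ ^ 2 = ρ := by
    linear_combination (-(1:ℝ)/2) * hrd + (ρ/2) * h2h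
  have hk1 : 2 * h * ρ < 1 := by rw [h2h]; linarith
  have hk0 : 0 ≤ 2 * h * ρ := mul_nonneg (mul_nonneg (by norm_num) hh0) hρ0
  set F : (UIdx n → ℝ) → (UIdx n → ℝ) := fun v =>
    (GR R).mulVec (_root_.vec (Qᵀ * ΔA))
      + (HR R).mulVec (_root_.vec (ΔAᵀ * ΔA - (fromUvec v)ᵀ * fromUvec v)) with hF
  have hFnorm : ∀ v, vnorm v ≤ ρ → vnorm (F v) ≤ ρ := by
    intro v hv
    refine le_trans (step_norm_bound Q ΔA R (fromUvec v)) ?_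
    rw [frob_fromUvec]
    have hv2 : vnorm v ^ 2 ≤ ρ ^ 2 := by nlinarith [vnorm_nonneg v]
    have : g * frob (Qᵀ * ΔA) + h * (frob ΔA ^ 2 + vnorm v ^ 2) ≤ c + h * ρ ^ 2 := by
      nlinarith [mul_le_mul_of_nonneg_left hv2 hh0]
    linarith [hρeq]
  have hFdiff : ∀ v v', vnorm v ≤ ρ → vnorm v' ≤ ρ →
      vnorm (F v - F v') ≤ (2 * h * ρ) * vnorm (v - v') := by
    intro v v' hv hv'
    have hFv : F v - F v' = (HR R).mulVec (_root_.vec (ΔAᵀ * ΔA - (fromUvec v)ᵀ * fromUvec v))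
        - (HR R).mulVec (_root_.vec (ΔAᵀ * ΔA - (fromUvec v')ᵀ * fromUvec v')) := by
      rw [hF]
      exact add_sub_add_left_eq_sub _ _ _
    rw [hFv]
    refine le_trans (step_diff_bound ΔA R (fromUvec v) (fromUvec v')) ?_
    rw [← fromUvec_sub, frob_fromUvec, frob_fromUvec, frob_fromUvec]
    rw [vnorm_sub_comm v' v, ← hh]
    have hsum : vnorm v + vnorm v' ≤ 2 * ρ := by linarith
    have hd0 : 0 ≤ vnorm (v - v') := vnorm_nonneg _
    nlinarith [mul_le_mul_of_nonneg_left (mul_le_mul_of_nonneg_right hsum hd0) hh0]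
  set B := Metric.closedBall (0 : EuclideanSpace ℝ (UIdx n)) ρ with hB
  have hclosed : IsClosed B := Metric.isClosed_closedBall
  haveI : CompleteSpace B := hclosed.completeSpace_coe
  haveI : Nonempty B := ⟨⟨0, Metric.mem_closedBall_self hρ0⟩⟩
  have hmemB : ∀ x : EuclideanSpace ℝ (UIdx n), x ∈ B ↔ vnorm (unE x) ≤ ρ := by
    intro x
    rw [hB, Metric.mem_closedBall, dist_zero_right, norm_unE]
  have hdistE : ∀ x y : EuclideanSpace ℝ (UIdx n), dist x y = vnorm (unE x - unE y) := by
    intro x y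
    rw [dist_eq_norm]
    exact norm_unE (x - y)
  set Φ : B → B := fun w => ⟨toE (F (unE w.1)), by
    rw [hmemB, unE_toE]
    exact hFnorm _ ((hmemB _).mp w.2)⟩ with hΦdef
  set K : NNReal := ⟨2 * h * ρ, hk0⟩ with hK
  have hcontr : ContractingWith K Φ := by
    constructor
    · exact_mod_cast hk1
    · refine LipschitzWith.of_dist_le_mul ?_
      intro x y
      rw [Subtype.dist_eq, Subtype.dist_eq, hΦdef]
      simp only
      rw [hdistE, unE_toE, unE_toE, hdistE]
      exact hFdiff (unE x.1) (unE y.1) ((hmemB _).mp x.2) ((hmemB _).mp y.2)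
  set w := ContractingWith.fixedPoint Φ hcontr with hw
  have hfix : Φ w = w := ContractingWith.fixedPoint_isFixedPt hcontr
  have hfix' : F (unE w.1) = unE w.1 := by
    have h1 : toE (F (unE w.1)) = w.1 := congrArg Subtype.val hfix
    have h2 := congrArg unE h1
    rwa [unE_toE] at h2
  refine ⟨fromUvec (unE w.1), isUpperTri_fromUvec _, ?_, ?_⟩
  · rw [frob_fromUvec]
    exact (hmemB _).mp w.2
  · rw [uvec_fromUvec]
    exact hfix'.symm

end QR
namespace QR

variable {n : ℕ}

lemma orth_of_gram {m : ℕ} {C : Matrix (Fin m) (Fin n) ℝ} {Rn : Matrix (Fin n) (Fin n) ℝ}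
    (hgram : Cᵀ * C = Rnᵀ * Rn) (hinv : Rn * Rn⁻¹ = 1) :
    (C * Rn⁻¹)ᵀ * (C * Rn⁻¹) = 1 := by
  rw [Matrix.transpose_mul]
  calc (Rn⁻¹)ᵀ * Cᵀ * (C * Rn⁻¹) = (Rn⁻¹)ᵀ * (Cᵀ * C) * Rn⁻¹ := by
        rw [Matrix.mul_assoc, Matrix.mul_assoc, Matrix.mul_assoc]
    _ = (Rn⁻¹)ᵀ * (Rnᵀ * Rn) * Rn⁻¹ := by rw [hgram]
    _ = ((Rn⁻¹)ᵀ * Rnᵀ) * (Rn * Rn⁻¹) := by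
        rw [Matrix.mul_assoc, Matrix.mul_assoc, Matrix.mul_assoc]
    _ = 1 := by
        rw [← Matrix.transpose_mul, hinv, Matrix.transpose_one, Matrix.one_mul]

lemma add_upperTri {X Y : Matrix (Fin n) (Fin n) ℝ} (hX : IsUpperTri X)
    (hY : IsUpperTri Y) : IsUpperTri (X + Y) := by
  intro i j hji
  rw [Matrix.add_apply, hX i j hji, hY i j hji, add_zero]

end QR

open QR in
theorem stmt4'_aux {m n : ℕ} (A Q ΔA : Matrix (Fin m) (Fin n) ℝ)
    (R : Matrix (Fin n) (Fin n) ℝ)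
    (hrank : A.rank = n) (hQ : Qᵀ * Q = 1) (hR : IsUpperTri R)
    (hRpos : ∀ i, 0 < R i i) (hA : A = Q * R)
    (hcond : spec (HR R) * (spec (GR R) * frob ΔA + spec (HR R) * (frob ΔA) ^ 2) < 1 / 4) :
    ∃ ΔQ : Matrix (Fin m) (Fin n) ℝ, ∃ ΔR : Matrix (Fin n) (Fin n) ℝ,
      (Q + ΔQ)ᵀ * (Q + ΔQ) = 1 ∧ IsUpperTri (R + ΔR) ∧ (∀ i, 0 < (R + ΔR) i i) ∧
      A + ΔA = (Q + ΔQ) * (R + ΔR) ∧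
      (∀ ΔQ' ΔR', (Q + ΔQ')ᵀ * (Q + ΔQ') = 1 → IsUpperTri (R + ΔR') →
        (∀ i, 0 < (R + ΔR') i i) → A + ΔA = (Q + ΔQ') * (R + ΔR') →
        ΔQ' = ΔQ ∧ ΔR' = ΔR) ∧
      frob ΔR ≤
        2 * (spec (GR R) * frob (Qᵀ * ΔA) + spec (HR R) * (frob ΔA) ^ 2) /
          (1 + Real.sqrt (1 - 4 * spec (HR R) *
            (spec (GR R) * frob (Qᵀ * ΔA) + spec (HR R) * (frob ΔA) ^ 2))) ∧
      2 * (spec (GR R) * frob (Qᵀ * ΔA) + spec (HR R) * (frob ΔA) ^ 2) /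
          (1 + Real.sqrt (1 - 4 * spec (HR R) *
            (spec (GR R) * frob (Qᵀ * ΔA) + spec (HR R) * (frob ΔA) ^ 2))) ≤
        2 * (spec (GR R) * frob (Qᵀ * ΔA) + spec (HR R) * (frob ΔA) ^ 2) := by
  classical
  have hg0 : 0 ≤ spec (GR R) := spec_nonneg _
  have hh0 : 0 ≤ spec (HR R) := spec_nonneg _
  have hEle : frob (Qᵀ * ΔA) ≤ frob ΔA := frob_proj_le hQ ΔA
  set g := spec (GR R) with hgdef
  set h := spec (HR R) with hhdef
  set c := g * frob (Qᵀ * ΔA) + h * frob ΔA ^ 2 with hc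
  set c' := g * frob ΔA + h * frob ΔA ^ 2 with hc'
  have hc0 : 0 ≤ c := add_nonneg (mul_nonneg hg0 (frob_nonneg _)) (mul_nonneg hh0 (sq_nonneg _))
  have hc'0 : 0 ≤ c' := add_nonneg (mul_nonneg hg0 (frob_nonneg _)) (mul_nonneg hh0 (sq_nonneg _))
  have hcc' : c ≤ c' := by
    have := mul_le_mul_of_nonneg_left hEle hg0
    rw [hc, hc']
    linarith
  have hcond' : h * c' < 1 / 4 := hcond
  have h4' : 4 * h * c' < 1 := by nlinarith
  have h4 : 4 * h * c < 1 := by nlinarith [mul_le_mul_of_nonneg_left hcc' hh0]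
  obtain ⟨ΔR, hUT, hbound, hfixed⟩ := exists_fixed Q ΔA R h4
  -- the quadratic matrix equation
  have hdet : IsUnit R.det := isUnit_det_of_upperTri hR hRpos
  have hinvR : R * R⁻¹ = 1 := Matrix.mul_nonsing_inv R hdet
  have hinvR' : R⁻¹ * R = 1 := Matrix.nonsing_inv_mul R hdet
  set E := Qᵀ * ΔA with hE
  set S := Rᵀ * E + Eᵀ * R + (ΔAᵀ * ΔA - ΔRᵀ * ΔR) with hS
  have hSsym : Sᵀ = S := by
    rw [hS]
    simp only [Matrix.transpose_add, Matrix.transpose_sub, Matrix.transpose_mul,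
      Matrix.transpose_transpose]
    abel
  have huvec : uvec ΔR = uvec (up ((R⁻¹)ᵀ * S * R⁻¹) * R) := by
    rw [hfixed, GR_mulVec hR hRpos, ← Matrix.mulVec_add, ← vec_add, ← hS, HR_mulVec]
  have hZut : IsUpperTri (up ((R⁻¹)ᵀ * S * R⁻¹) * R) := mul_upperTri (isUpperTri_up _) hR
  have hΔR : ΔR = up ((R⁻¹)ᵀ * S * R⁻¹) * R := by
    rw [← fromUvec_uvec hUT, huvec, fromUvec_uvec hZut]
  have hMsym : ((R⁻¹)ᵀ * S * R⁻¹)ᵀ = (R⁻¹)ᵀ * S * R⁻¹ := by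
    rw [Matrix.transpose_mul, Matrix.transpose_mul, Matrix.transpose_transpose, hSsym,
      Matrix.mul_assoc]
  have hkey : Rᵀ * ΔR + ΔRᵀ * R = S := by
    have e0 : ∀ U : Matrix (Fin n) (Fin n) ℝ,
        Rᵀ * (U * R) + (U * R)ᵀ * R = Rᵀ * (U + Uᵀ) * R := by
      intro U
      simp only [Matrix.transpose_mul, Matrix.mul_add, Matrix.add_mul, Matrix.mul_assoc]
    rw [hΔR, e0, up_add_up_transpose hMsym]
    calc Rᵀ * ((R⁻¹)ᵀ * S * R⁻¹) * R
        = (Rᵀ * (R⁻¹)ᵀ) * (S * (R⁻¹ * R)) := by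
          simp only [Matrix.mul_assoc]
    _ = S := by
          rw [hinvR', Matrix.mul_one, ← Matrix.transpose_mul, hinvR', Matrix.transpose_one,
            Matrix.one_mul]
  have hgram : (A + ΔA)ᵀ * (A + ΔA) = (R + ΔR)ᵀ * (R + ΔR) := by
    have lhs : (A + ΔA)ᵀ * (A + ΔA) = Rᵀ * R + (Rᵀ * E + Eᵀ * R + ΔAᵀ * ΔA) := by
      have hAT : (A + ΔA)ᵀ = Rᵀ * Qᵀ + ΔAᵀ := by
        rw [hA, Matrix.transpose_add, Matrix.transpose_mul]
      rw [hAT, hA, Matrix.add_mul, Matrix.mul_add, Matrix.mul_add]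
      have e1 : Rᵀ * Qᵀ * (Q * R) = Rᵀ * R := by
        rw [Matrix.mul_assoc, ← Matrix.mul_assoc Qᵀ, hQ, Matrix.one_mul]
      have e2 : Rᵀ * Qᵀ * ΔA = Rᵀ * E := by rw [hE, Matrix.mul_assoc]
      have e3 : ΔAᵀ * (Q * R) = Eᵀ * R := by
        rw [hE, Matrix.transpose_mul, Matrix.transpose_transpose, Matrix.mul_assoc]
      rw [e1, e2, e3]
      abel
    have rhs : (R + ΔR)ᵀ * (R + ΔR) = Rᵀ * R + (Rᵀ * ΔR + ΔRᵀ * R + ΔRᵀ * ΔR) := by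
      simp only [Matrix.transpose_add, Matrix.add_mul, Matrix.mul_add]
      abel
    rw [lhs, rhs, hkey, hS]
    congr 1
    abel
  -- positivity of new diagonal
  set s := Real.sqrt (1 - 4 * h * c) with hsd
  set ρ := 2 * c / (1 + s) with hρd
  have hs0 : 0 ≤ s := Real.sqrt_nonneg _
  have hρle2c : ρ ≤ 2 * c := by
    rw [hρd]
    apply div_le_self (by linarith) (by linarith)
  have hfb : frob ΔR ≤ ρ := hbound
  have hdiagpos : ∀ i, 0 < (R + ΔR) i i := by
    intro i
    have hRii := hRpos i
    have hi : 1 / (2 * R i i) ≤ h := spec_HR_ge hR hRpos i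
    have h2R : 1 ≤ h * (2 * R i i) := by
      rw [div_le_iff₀ (by linarith)] at hi
      linarith [hi]
    have h2c' : 2 * c' < R i i := by
      nlinarith [mul_le_mul_of_nonneg_left h2R (by linarith : (0:ℝ) ≤ 2 * c'),
        mul_lt_mul_of_pos_right h4' hRii]
    have habs : |ΔR i i| ≤ frob ΔR := abs_le_frob ΔR i i
    have : |ΔR i i| < R i i := by linarith
    rw [Matrix.add_apply]
    have := neg_abs_le (ΔR i i)
    linarith [abs_lt.mp ‹|ΔR i i| < R i i›]
  have hUTn : IsUpperTri (R + ΔR) := add_upperTri hR hUT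
  have hdetn : IsUnit (R + ΔR).det := isUnit_det_of_upperTri hUTn hdiagpos
  have hinvn : (R + ΔR) * (R + ΔR)⁻¹ = 1 := Matrix.mul_nonsing_inv _ hdetn
  have hinvn' : (R + ΔR)⁻¹ * (R + ΔR) = 1 := Matrix.nonsing_inv_mul _ hdetn
  refine ⟨(A + ΔA) * (R + ΔR)⁻¹ - Q, ΔR, ?_, hUTn, hdiagpos, ?_, ?_, hbound, ?_⟩
  · have hQn : Q + ((A + ΔA) * (R + ΔR)⁻¹ - Q) = (A + ΔA) * (R + ΔR)⁻¹ := by abel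
    rw [hQn]
    exact orth_of_gram hgram hinvn
  · have hQn : Q + ((A + ΔA) * (R + ΔR)⁻¹ - Q) = (A + ΔA) * (R + ΔR)⁻¹ := by abel
    rw [hQn, Matrix.mul_assoc, hinvn', Matrix.mul_one]
  · intro ΔQ' ΔR' horth' hUT' hpos' hfact'
    have hgram' : (R + ΔR')ᵀ * (R + ΔR') = (R + ΔR)ᵀ * (R + ΔR) := by
      have h1 : (A + ΔA)ᵀ * (A + ΔA) = (R + ΔR')ᵀ * (R + ΔR') := by
        rw [hfact', Matrix.transpose_mul]
        calc (R + ΔR')ᵀ * (Q + ΔQ')ᵀ * ((Q + ΔQ') * (R + ΔR'))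
            = (R + ΔR')ᵀ * ((Q + ΔQ')ᵀ * (Q + ΔQ')) * (R + ΔR') := by
              simp only [Matrix.mul_assoc]
          _ = (R + ΔR')ᵀ * (R + ΔR') := by rw [horth', Matrix.mul_one]
      rw [← h1, hgram]
    have hReq : R + ΔR' = R + ΔR := chol_unique hUT' hpos' hUTn hdiagpos hgram'
    have hΔReq : ΔR' = ΔR := by
      have := hReq
      rwa [add_right_inj] at this
    constructor
    · have hq : (Q + ΔQ') * (R + ΔR) = A + ΔA := by rw [← hΔReq]; exact hfact'.symm
      have : Q + ΔQ' = (A + ΔA) * (R + ΔR)⁻¹ := by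
        rw [← hq, Matrix.mul_assoc, hinvn, Matrix.mul_one]
      calc ΔQ' = (Q + ΔQ') - Q := by abel
        _ = (A + ΔA) * (R + ΔR)⁻¹ - Q := by rw [this]
    · exact hΔReq
  · exact hρle2c

theorem stmt4 {m n : ℕ} (A Q ΔA : Matrix (Fin m) (Fin n) ℝ)
    (R : Matrix (Fin n) (Fin n) ℝ)
    (hrank : A.rank = n) (hQ : Qᵀ * Q = 1) (hR : IsUpperTri R)
    (hRpos : ∀ i, 0 < R i i) (hA : A = Q * R)
    (hcond : spec (HR R) * (spec (GR R) * frob ΔA + spec (HR R) * (frob ΔA) ^ 2) < 1 / 4) :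
    ∃ ΔQ : Matrix (Fin m) (Fin n) ℝ, ∃ ΔR : Matrix (Fin n) (Fin n) ℝ,
      (Q + ΔQ)ᵀ * (Q + ΔQ) = 1 ∧ IsUpperTri (R + ΔR) ∧ (∀ i, 0 < (R + ΔR) i i) ∧
      A + ΔA = (Q + ΔQ) * (R + ΔR) ∧
      (∀ ΔQ' ΔR', (Q + ΔQ')ᵀ * (Q + ΔQ') = 1 → IsUpperTri (R + ΔR') →
        (∀ i, 0 < (R + ΔR') i i) → A + ΔA = (Q + ΔQ') * (R + ΔR') →
        ΔQ' = ΔQ ∧ ΔR' = ΔR) ∧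
      frob ΔR ≤
        2 * (spec (GR R) * frob (Qᵀ * ΔA) + spec (HR R) * (frob ΔA) ^ 2) /
          (1 + Real.sqrt (1 - 4 * spec (HR R) *
            (spec (GR R) * frob (Qᵀ * ΔA) + spec (HR R) * (frob ΔA) ^ 2))) ∧
      2 * (spec (GR R) * frob (Qᵀ * ΔA) + spec (HR R) * (frob ΔA) ^ 2) /
          (1 + Real.sqrt (1 - 4 * spec (HR R) *
            (spec (GR R) * frob (Qᵀ * ΔA) + spec (HR R) * (frob ΔA) ^ 2))) ≤
        2 * (spec (GR R) * frob (Qᵀ * ΔA) + spec (HR R) * (frob ΔA) ^ 2) := by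
  exact stmt4'_aux A Q ΔA R hrank hQ hR hRpos hA hcond
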